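/- For the iterated Latin hypercube sampling sequence with k ≥ 2 coordinates, for every t ≥ 0 and every pair of distinct indices i ≠ j in {1, …, k}, the correlation satisfies Corr(U_t^{(i)}, U_t^{(j)}) = −(1/(k−1)) · (1 − k^{−2t}). -/

import Mathlib

open MeasureTheory ProbabilityTheory

instance {k : ℕ} : MeasurableSpace (Equiv.Perm (Fin k)) := ⊤

/-- The iterated Latin hypercube sampling (ILHS) recursion:
`U₀` has i.i.d. Uniform(0,1) coordinates and
`U_{t+1}⁽ʲ⁾ = (σ_t(j) + U_t⁽ʲ⁾)/k`. -/
noncomputable def ilhs {Ω : Type*} {k : ℕ} (U0 : Fin k → Ω → ℝ)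
    (σ : ℕ → Ω → Equiv.Perm (Fin k)) : ℕ → Fin k → Ω → ℝ
  | 0 => U0
  | t + 1 => fun j ω => (((σ t ω j : ℕ) : ℝ) + ilhs U0 σ t j ω) / k

/-- Value types for the joint family consisting of the initial uniforms and the random
permutations. -/
def ilhsβ (k : ℕ) : Fin k ⊕ ℕ → Type
  | Sum.inl _ => ℝ
  | Sum.inr _ => Equiv.Perm (Fin k)

instance ilhsβMeasurableSpace (k : ℕ) : ∀ x, MeasurableSpace (ilhsβ k x)
  | Sum.inl _ => (inferInstance : MeasurableSpace ℝ)
  | Sum.inr _ => (inferInstance : MeasurableSpace (Equiv.Perm (Fin k)))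

/-- The joint family consisting of the initial uniforms and the random permutations. -/
def ilhsFam {Ω : Type*} {k : ℕ} (U0 : Fin k → Ω → ℝ)
    (σ : ℕ → Ω → Equiv.Perm (Fin k)) : ∀ x : Fin k ⊕ ℕ, Ω → ilhsβ k x
  | Sum.inl j => U0 j
  | Sum.inr t => σ t

/-- The defining hypotheses of the ILHS sequence: the initial coordinates are
Uniform(0,1), each `σ_t` is a uniformly distributed random permutation of
`{0, …, k−1}`, and all of these are mutually independent. -/
def IsILHS {Ω : Type*} [MeasurableSpace Ω] (μ : Measure Ω) {k : ℕ}
    (U0 : Fin k → Ω → ℝ) (σ : ℕ → Ω → Equiv.Perm (Fin k)) : Prop :=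
  (∀ j, Measurable (U0 j)) ∧ (∀ t, Measurable (σ t)) ∧
  (∀ j, μ.map (U0 j) = volume.restrict (Set.Ioo (0 : ℝ) 1)) ∧
  (∀ t (π : Equiv.Perm (Fin k)), μ {ω | σ t ω = π} = ((Nat.factorial k : ENNReal))⁻¹) ∧
  iIndepFun (m := ilhsβMeasurableSpace k) (ilhsFam U0 σ) μ

/-- Covariance of two real-valued functions with respect to a measure. -/
noncomputable def covar {Ω : Type*} [MeasurableSpace Ω] (μ : Measure Ω) (f g : Ω → ℝ) : ℝ :=
  (∫ ω, f ω * g ω ∂μ) - (∫ ω, f ω ∂μ) * ∫ ω, g ω ∂μ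

/-- Correlation of two real-valued random variables. -/
noncomputable def corr {Ω : Type*} [MeasurableSpace Ω] (μ : Measure Ω) (f g : Ω → ℝ) : ℝ :=
  covar μ f g / (Real.sqrt (covar μ f f) * Real.sqrt (covar μ g g))

set_option linter.unusedSectionVars false

instance {k : ℕ} : MeasurableSingletonClass (Equiv.Perm (Fin k)) := ⟨fun _ => trivial⟩

lemma sum_fin_cast (k : ℕ) : ∑ a : Fin k, ((a : ℕ) : ℝ) = k * (k - 1) / 2 := by
  rw [Fin.sum_univ_eq_sum_range]
  induction k with
  | zero => simp
  | succ n ih =>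
    rw [Finset.sum_range_succ, ih]
    push_cast
    ring

lemma sum_fin_cast_sq (k : ℕ) : ∑ a : Fin k, ((a : ℕ) : ℝ)^2 = k * (k - 1) * (2*k - 1) / 6 := by
  rw [Fin.sum_univ_eq_sum_range (fun i => ((i : ℕ) : ℝ)^2)]
  induction k with
  | zero => simp
  | succ n ih =>
    rw [Finset.sum_range_succ, ih]
    push_cast
    ring

lemma sum_perm_apply {k : ℕ} (i : Fin k) :
    ∑ π : Equiv.Perm (Fin k), ((π i : ℕ) : ℝ) = (Nat.factorial k) * ((k - 1) / 2) := by
  have hsym : ∀ m : Fin k, ∑ π : Equiv.Perm (Fin k), ((π m : ℕ) : ℝ)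
      = ∑ π : Equiv.Perm (Fin k), ((π i : ℕ) : ℝ) := by
    intro m
    have := Equiv.sum_comp (Equiv.mulRight (Equiv.swap i m))
      (fun π : Equiv.Perm (Fin k) => ((π i : ℕ) : ℝ))
    simpa [Equiv.Perm.mul_apply, Equiv.swap_apply_left] using this
  have htot : ∑ m : Fin k, ∑ π : Equiv.Perm (Fin k), ((π m : ℕ) : ℝ)
      = (Nat.factorial k) * (k * (k - 1) / 2) := by
    rw [Finset.sum_comm]
    have : ∀ π : Equiv.Perm (Fin k), ∑ m : Fin k, ((π m : ℕ) : ℝ) = k * (k-1)/2 := by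
      intro π
      rw [Equiv.sum_comp π (fun a : Fin k => ((a : ℕ) : ℝ))]
      exact sum_fin_cast k
    simp [this, Finset.sum_const, Finset.card_univ, Fintype.card_perm]
  have hk : (0 : ℝ) < k := by
    have : 0 < k := i.pos
    exact_mod_cast this
  have h2 : (k : ℝ) * ∑ π : Equiv.Perm (Fin k), ((π i : ℕ) : ℝ)
      = (Nat.factorial k) * (k * (k - 1) / 2) := by
    rw [← htot]
    simp [hsym, Finset.sum_const, Finset.card_univ, mul_comm]
  field_simp at h2 ⊢
  nlinarith [h2]


lemma sum_perm_apply_sq {k : ℕ} (i : Fin k) :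
    ∑ π : Equiv.Perm (Fin k), ((π i : ℕ) : ℝ)^2
      = (Nat.factorial k) * ((k - 1) * (2*k - 1) / 6) := by
  have hsym : ∀ m : Fin k, ∑ π : Equiv.Perm (Fin k), ((π m : ℕ) : ℝ)^2
      = ∑ π : Equiv.Perm (Fin k), ((π i : ℕ) : ℝ)^2 := by
    intro m
    have := Equiv.sum_comp (Equiv.mulRight (Equiv.swap i m))
      (fun π : Equiv.Perm (Fin k) => ((π i : ℕ) : ℝ)^2)
    simpa [Equiv.Perm.mul_apply, Equiv.swap_apply_left] using this
  have htot : ∑ m : Fin k, ∑ π : Equiv.Perm (Fin k), ((π m : ℕ) : ℝ)^2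
      = (Nat.factorial k) * (k * (k - 1) * (2*k - 1) / 6) := by
    rw [Finset.sum_comm]
    have : ∀ π : Equiv.Perm (Fin k), ∑ m : Fin k, ((π m : ℕ) : ℝ)^2
        = k * (k-1) * (2*k-1) / 6 := by
      intro π
      rw [Equiv.sum_comp π (fun a : Fin k => ((a : ℕ) : ℝ)^2)]
      exact sum_fin_cast_sq k
    simp [this, Finset.sum_const, Finset.card_univ, Fintype.card_perm]
  have hk : (0 : ℝ) < k := by exact_mod_cast i.pos
  have h2 : (k : ℝ) * ∑ π : Equiv.Perm (Fin k), ((π i : ℕ) : ℝ)^2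
      = (Nat.factorial k) * (k * (k - 1) * (2*k - 1) / 6) := by
    rw [← htot]
    simp [hsym, Finset.sum_const, Finset.card_univ, mul_comm]
  field_simp at h2 ⊢
  nlinarith [h2]

lemma sum_perm_apply_mul {k : ℕ} (hk2 : 2 ≤ k) {i j : Fin k} (hij : i ≠ j) :
    ∑ π : Equiv.Perm (Fin k), ((π i : ℕ) : ℝ) * ((π j : ℕ) : ℝ)
      = (Nat.factorial k) * ((3*(k:ℝ)^2 - 7*k + 2) / 12) := by
  classical
  set T : Fin k → Fin k → ℝ :=
    fun m n => ∑ π : Equiv.Perm (Fin k), ((π m : ℕ) : ℝ) * ((π n : ℕ) : ℝ) with hT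
  -- symmetry: T m n = T i j for m ≠ n
  have hsym : ∀ m n : Fin k, m ≠ n → T m n = T i j := by
    intro m n hmn
    set τ : Equiv.Perm (Fin k) := (Equiv.swap (Equiv.swap i m j) n) * (Equiv.swap i m) with hτ
    have hne1 : Equiv.swap i m j ≠ m := by
      intro hcon
      apply hij
      have := (Equiv.swap i m).injective (a₁ := j) (a₂ := i)
      exact (this (by rw [hcon, Equiv.swap_apply_left])).symm ▸ rfl
    have hτi : τ i = m := by
      simp only [hτ, Equiv.Perm.mul_apply, Equiv.swap_apply_left]
      exact Equiv.swap_apply_of_ne_of_ne hne1.symm hmn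
    have hτj : τ j = n := by
      simp only [hτ, Equiv.Perm.mul_apply]
      exact Equiv.swap_apply_left _ _
    have := Equiv.sum_comp (Equiv.mulRight τ)
      (fun π : Equiv.Perm (Fin k) => ((π i : ℕ) : ℝ) * ((π j : ℕ) : ℝ))
    simp only [Equiv.coe_mulRight, Equiv.Perm.mul_apply, hτi, hτj] at this
    exact this
  -- total sum over all (m,n)
  have hrow : ∀ m : Fin k, ∑ n : Fin k, T m n
      = ∑ π : Equiv.Perm (Fin k), ((π m : ℕ) : ℝ) * (k * (k-1)/2) := by
    intro m
    rw [hT, Finset.sum_comm]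
    refine Finset.sum_congr rfl fun π _ => ?_
    rw [← Finset.mul_sum, Equiv.sum_comp π (fun a : Fin k => ((a : ℕ) : ℝ)), sum_fin_cast k]
  have htot : ∑ m : Fin k, ∑ n : Fin k, T m n
      = (Nat.factorial k) * ((k * ((k:ℝ) - 1) / 2)^2) := by
    rw [Finset.sum_congr rfl fun m (_ : m ∈ Finset.univ) => hrow m, Finset.sum_comm]
    have : ∀ π : Equiv.Perm (Fin k), ∑ m : Fin k, ((π m : ℕ) : ℝ) * (k * (k-1)/2)
        = (k * ((k:ℝ)-1)/2)^2 := by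
      intro π
      rw [← Finset.sum_mul, Equiv.sum_comp π (fun a : Fin k => ((a : ℕ) : ℝ)), sum_fin_cast k]
      ring
    simp [this, Finset.sum_const, Finset.card_univ, Fintype.card_perm]
  -- diagonal
  have hdiag : ∑ m : Fin k, T m m
      = (Nat.factorial k) * ((k:ℝ) * ((k:ℝ) - 1) * (2*(k:ℝ) - 1) / 6) := by
    have h1 : ∑ m : Fin k, T m m
        = ∑ π : Equiv.Perm (Fin k), ∑ m : Fin k, ((π m : ℕ) : ℝ) * ((π m : ℕ) : ℝ) := by
      rw [hT, Finset.sum_comm]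
    rw [h1]
    have : ∀ π : Equiv.Perm (Fin k), ∑ m : Fin k, ((π m : ℕ) : ℝ) * ((π m : ℕ) : ℝ)
        = (k:ℝ) * ((k:ℝ)-1) * (2*(k:ℝ)-1) / 6 := by
      intro π
      have : ∀ m : Fin k, ((π m : ℕ) : ℝ) * ((π m : ℕ) : ℝ) = ((π m : ℕ) : ℝ)^2 := by
        intro m; ring
      simp only [this]
      rw [Equiv.sum_comp π (fun a : Fin k => ((a : ℕ) : ℝ)^2)]
      exact sum_fin_cast_sq k
    simp [this, Finset.sum_const, Finset.card_univ, Fintype.card_perm]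
  -- decomposition
  have hdecomp : ∑ m : Fin k, ∑ n : Fin k, T m n
      = (∑ m : Fin k, T m m) + (k:ℝ) * ((k:ℝ) - 1) * T i j := by
    have hrow2 : ∀ m : Fin k, ∑ n : Fin k, T m n
        = T m m + ((k:ℝ) - 1) * T i j := by
      intro m
      rw [← Finset.add_sum_erase Finset.univ (fun n => T m n) (Finset.mem_univ m)]
      congr 1
      have : ∀ n ∈ Finset.univ.erase m, T m n = T i j := by
        intro n hn
        exact hsym m n (Ne.symm (Finset.ne_of_mem_erase hn))
      rw [Finset.sum_congr rfl this, Finset.sum_const,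
        Finset.card_erase_of_mem (Finset.mem_univ m), Finset.card_univ, Fintype.card_fin]
      have hkcast : ((k - 1 : ℕ) : ℝ) = (k:ℝ) - 1 := by
        have : 1 ≤ k := le_trans (by norm_num) hk2
        push_cast [this]
        ring
      rw [nsmul_eq_mul, hkcast]
    rw [Finset.sum_congr rfl (fun m _ => hrow2 m), Finset.sum_add_distrib,
      Finset.sum_const, Finset.card_univ, Fintype.card_fin, nsmul_eq_mul]
    ring
  rw [htot, hdiag] at hdecomp
  have hkR : (2:ℝ) ≤ (k:ℝ) := by exact_mod_cast hk2
  have hc : (k:ℝ) * ((k:ℝ) - 1) ≠ 0 := by nlinarith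
  have hT2 : (k:ℝ) * ((k:ℝ) - 1) * T i j
      = (Nat.factorial k) * (((k:ℝ) * ((k:ℝ) - 1) / 2)^2)
        - (Nat.factorial k) * ((k:ℝ) * ((k:ℝ) - 1) * (2*(k:ℝ) - 1) / 6) := by
    linarith [hdecomp]
  apply mul_left_cancel₀ hc
  rw [hT2]
  ring


/-- Index set of the variables the time-`t` ILHS value depends on. -/
def ilhsTset (k t : ℕ) : Finset (Fin k ⊕ ℕ) :=
  Finset.univ.image Sum.inl ∪ (Finset.range t).image Sum.inr

lemma ilhsTset_mono {k t : ℕ} : ilhsTset k t ⊆ ilhsTset k (t + 1) := by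
  apply Finset.union_subset_union_right
  exact Finset.image_subset_image (Finset.range_subset_range.2 (Nat.le_succ t))

lemma inr_not_mem_ilhsTset {k t : ℕ} : Sum.inr t ∉ ilhsTset k t := by
  simp [ilhsTset]

lemma inl_mem_ilhsTset {k t : ℕ} (j : Fin k) : Sum.inl j ∈ ilhsTset k t := by
  simp [ilhsTset]

lemma inr_mem_ilhsTset_succ {k t : ℕ} : Sum.inr t ∈ ilhsTset k (t + 1) := by
  simp [ilhsTset]

lemma ilhsFam_meas {Ω : Type*} [MeasurableSpace Ω] {μ : Measure Ω} {k : ℕ}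
    {U0 : Fin k → Ω → ℝ} {σ : ℕ → Ω → Equiv.Perm (Fin k)} (h : IsILHS μ U0 σ) :
    ∀ x, Measurable (ilhsFam U0 σ x)
  | Sum.inl j => h.1 j
  | Sum.inr t => h.2.1 t

/-- Extract the permutation component (definitional cast). -/
def getPerm {k : ℕ} (t : ℕ) (v : ilhsβ k (Sum.inr t)) : Equiv.Perm (Fin k) := v

lemma getPerm_meas {k : ℕ} (t : ℕ) : Measurable (getPerm (k := k) t) :=
  measurable_from_top

/-- The time-`t` value factors measurably through the restricted family. -/
lemma ilhs_factor {Ω : Type*} {k : ℕ} (U0 : Fin k → Ω → ℝ)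
    (σ : ℕ → Ω → Equiv.Perm (Fin k)) (t : ℕ) (j : Fin k) :
    ∃ ψ : ((x : ilhsTset k t) → ilhsβ k x) → ℝ, Measurable ψ ∧
      ∀ ω, ilhs U0 σ t j ω = ψ (fun x => ilhsFam U0 σ x ω) := by
  induction t with
  | zero =>
    refine ⟨fun g => (g ⟨Sum.inl j, inl_mem_ilhsTset j⟩ : ℝ), ?_, fun ω => rfl⟩
    exact measurable_pi_apply _
  | succ t ih =>
    obtain ⟨ψ, hψ, hψeq⟩ := ih
    set r : ((x : ilhsTset k (t+1)) → ilhsβ k x) → ((x : ilhsTset k t) → ilhsβ k x) :=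
      fun g x => g ⟨x.1, ilhsTset_mono x.2⟩ with hr
    have hrmeas : Measurable r :=
      measurable_pi_lambda _ (fun x => measurable_pi_apply _)
    refine ⟨fun g =>
      ((((getPerm t (g ⟨Sum.inr t, inr_mem_ilhsTset_succ⟩)) j : ℕ) : ℝ)
        + ψ (r g)) / (k : ℝ), ?_, ?_⟩
    · apply Measurable.div_const
      apply Measurable.add
      · exact (measurable_from_top
          (f := fun π : Equiv.Perm (Fin k) => ((π j : ℕ) : ℝ))).comp
          ((getPerm_meas t).comp
            (measurable_pi_apply (⟨Sum.inr t, inr_mem_ilhsTset_succ⟩ : ilhsTset k (t+1))))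
      · exact hψ.comp hrmeas
    · intro ω
      show (((σ t ω j : ℕ) : ℝ) + ilhs U0 σ t j ω) / k = _
      rw [hψeq ω]
      rfl

/-- `σ t` is independent of the pair of time-`t` values. -/
lemma indep_sigma_ilhs {Ω : Type*} [MeasurableSpace Ω] {μ : Measure Ω} {k : ℕ}
    {U0 : Fin k → Ω → ℝ} {σ : ℕ → Ω → Equiv.Perm (Fin k)} (h : IsILHS μ U0 σ)
    (t : ℕ) (i j : Fin k) :
    IndepFun (σ t) (fun ω => (ilhs U0 σ t i ω, ilhs U0 σ t j ω)) μ := by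
  classical
  obtain ⟨ψi, hψi, hψieq⟩ := ilhs_factor U0 σ t i
  obtain ⟨ψj, hψj, hψjeq⟩ := ilhs_factor U0 σ t j
  have hdisj : Disjoint ({Sum.inr t} : Finset (Fin k ⊕ ℕ)) (ilhsTset k t) := by
    simp [Finset.disjoint_left, inr_not_mem_ilhsTset]
  have base := (h.2.2.2.2).indepFun_finset {Sum.inr t} (ilhsTset k t) hdisj (ilhsFam_meas h)
  have hφ : Measurable (fun g : ((x : ({Sum.inr t} : Finset (Fin k ⊕ ℕ))) → ilhsβ k x) =>
      getPerm t (g ⟨Sum.inr t, Finset.mem_singleton_self _⟩)) :=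
    (getPerm_meas t).comp (measurable_pi_apply _)
  have hψ : Measurable (fun g : ((x : ilhsTset k t) → ilhsβ k x) => (ψi g, ψj g)) :=
    hψi.prodMk hψj
  have h1 : σ t = (fun g : ((x : ({Sum.inr t} : Finset (Fin k ⊕ ℕ))) → ilhsβ k x) =>
      getPerm t (g ⟨Sum.inr t, Finset.mem_singleton_self _⟩))
        ∘ (fun a (x : ({Sum.inr t} : Finset (Fin k ⊕ ℕ))) => ilhsFam U0 σ x a) := rfl
  have h2 : (fun ω => (ilhs U0 σ t i ω, ilhs U0 σ t j ω))
      = (fun g : ((x : ilhsTset k t) → ilhsβ k x) => (ψi g, ψj g))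
        ∘ (fun a (x : ilhsTset k t) => ilhsFam U0 σ x a) := by
    funext ω
    simp only [Function.comp_apply, ← hψieq ω, ← hψjeq ω]
  rw [h1, h2]
  exact base.comp hφ hψ


section

variable {Ω : Type*} [MeasurableSpace Ω] {μ : Measure Ω} [IsProbabilityMeasure μ]
  {k : ℕ} {U0 : Fin k → Ω → ℝ} {σ : ℕ → Ω → Equiv.Perm (Fin k)}

lemma integral_perm_fun (h : IsILHS μ U0 σ) (t : ℕ) (f : Equiv.Perm (Fin k) → ℝ) :
    ∫ ω, f (σ t ω) ∂μ = (∑ π : Equiv.Perm (Fin k), f π) / (Nat.factorial k) := by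
  have hσ : Measurable (σ t) := h.2.1 t
  have hmap : IsProbabilityMeasure (μ.map (σ t)) :=
    Measure.isProbabilityMeasure_map hσ.aemeasurable
  rw [← integral_map hσ.aemeasurable
    (measurable_from_top (f := f)).aestronglyMeasurable]
  rw [integral_fintype (f := f) (Integrable.of_finite)]
  have hsing : ∀ π : Equiv.Perm (Fin k), (μ.map (σ t)) {π} = ((Nat.factorial k : ENNReal))⁻¹ := by
    intro π
    rw [Measure.map_apply hσ trivial]
    have : σ t ⁻¹' {π} = {ω | σ t ω = π} := by
      ext ω; simp
    rw [this]
    exact h.2.2.2.1 t π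
  have htoReal : ∀ π : Equiv.Perm (Fin k),
      ((μ.map (σ t)) {π}).toReal = ((Nat.factorial k : ℝ))⁻¹ := by
    intro π
    rw [hsing π]
    simp
  simp only [measureReal_def, htoReal, smul_eq_mul, ← Finset.mul_sum]
  rw [inv_mul_eq_div]

end


section

variable {Ω : Type*} [MeasurableSpace Ω] {μ : Measure Ω} [IsProbabilityMeasure μ]
  {k : ℕ} {U0 : Fin k → Ω → ℝ} {σ : ℕ → Ω → Equiv.Perm (Fin k)}


lemma ilhs_meas (h : IsILHS μ U0 σ) : ∀ t j, Measurable (ilhs U0 σ t j) := by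
  intro t
  induction t with
  | zero => exact h.1
  | succ t ih =>
    intro j
    exact (((measurable_from_top (f := fun π : Equiv.Perm (Fin k) => ((π j : ℕ) : ℝ))).comp
      (h.2.1 t)).add (ih j)).div_const _

lemma ilhs_bdd (h : IsILHS μ U0 σ) : ∀ t j, ∀ᵐ ω ∂μ, ilhs U0 σ t j ω ∈ Set.Icc (0:ℝ) 1 := by
  intro t
  induction t with
  | zero =>
    intro j
    have hpre : μ (U0 j ⁻¹' (Set.Ioo (0:ℝ) 1)ᶜ) = 0 := by
      rw [← Measure.map_apply (h.1 j) (measurableSet_Ioo (a := (0:ℝ)) (b := 1)).compl, h.2.2.1 j,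
        Measure.restrict_apply measurableSet_Ioo.compl, Set.compl_inter_self,
        measure_empty]
    have : ∀ᵐ ω ∂μ, U0 j ω ∈ Set.Ioo (0:ℝ) 1 := by
      rw [MeasureTheory.ae_iff]
      refine measure_mono_null ?_ hpre
      intro ω hω
      simpa using hω
    filter_upwards [this] with ω hω
    exact ⟨le_of_lt hω.1, le_of_lt hω.2⟩
  | succ t ih =>
    intro j
    have hkpos : (0:ℝ) < k := by exact_mod_cast j.pos
    filter_upwards [ih j] with ω hω
    have hlt : ((σ t ω j : ℕ) : ℝ) + 1 ≤ (k : ℝ) := by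
      exact_mod_cast Nat.succ_le_of_lt (σ t ω j).is_lt
    constructor
    · show (0:ℝ) ≤ (((σ t ω j : ℕ) : ℝ) + ilhs U0 σ t j ω) / k
      apply div_nonneg _ hkpos.le
      have : (0:ℝ) ≤ ((σ t ω j : ℕ) : ℝ) := Nat.cast_nonneg _
      linarith [hω.1]
    · show (((σ t ω j : ℕ) : ℝ) + ilhs U0 σ t j ω) / k ≤ 1
      rw [div_le_one hkpos]
      linarith [hω.2]

lemma ilhs_int (h : IsILHS μ U0 σ) (t : ℕ) (j : Fin k) :
    Integrable (ilhs U0 σ t j) μ := by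
  refine Integrable.mono' (integrable_const (1:ℝ)) (ilhs_meas h t j).aestronglyMeasurable ?_
  filter_upwards [ilhs_bdd h t j] with ω hω
  rw [Real.norm_eq_abs, abs_le]
  exact ⟨by linarith [hω.1], hω.2⟩

lemma ilhs_int_mul (h : IsILHS μ U0 σ) (t : ℕ) (i j : Fin k) :
    Integrable (fun ω => ilhs U0 σ t i ω * ilhs U0 σ t j ω) μ := by
  refine Integrable.mono' (integrable_const (1:ℝ))
    (((ilhs_meas h t i).mul (ilhs_meas h t j)).aestronglyMeasurable) ?_
  filter_upwards [ilhs_bdd h t i, ilhs_bdd h t j] with ω h1 h2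
  rw [Real.norm_eq_abs, abs_mul]
  calc |ilhs U0 σ t i ω| * |ilhs U0 σ t j ω| ≤ 1 * 1 := by
        apply mul_le_mul
        · rw [abs_le]; exact ⟨by linarith [h1.1], h1.2⟩
        · rw [abs_le]; exact ⟨by linarith [h2.1], h2.2⟩
        · exact abs_nonneg _
        · norm_num
    _ = 1 := by norm_num

lemma sigma_fn_int (h : IsILHS μ U0 σ) (t : ℕ) (f : Equiv.Perm (Fin k) → ℝ) :
    Integrable (fun ω => f (σ t ω)) μ := by
  refine Integrable.mono' (integrable_const (∑ π : Equiv.Perm (Fin k), |f π|))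
    ((measurable_from_top (f := f)).comp (h.2.1 t)).aestronglyMeasurable ?_
  filter_upwards with ω
  rw [Real.norm_eq_abs]
  exact Finset.single_le_sum (f := fun π => |f π|) (fun i _ => abs_nonneg _)
    (Finset.mem_univ (σ t ω))

lemma sigma_mul_ilhs_int (h : IsILHS μ U0 σ) (t : ℕ) (f : Equiv.Perm (Fin k) → ℝ)
    (j : Fin k) : Integrable (fun ω => f (σ t ω) * ilhs U0 σ t j ω) μ := by
  refine Integrable.mono' (integrable_const (∑ π : Equiv.Perm (Fin k), |f π|))
    (((measurable_from_top (f := f)).comp (h.2.1 t)).mul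
      (ilhs_meas h t j)).aestronglyMeasurable ?_
  filter_upwards [ilhs_bdd h t j] with ω hω
  rw [Real.norm_eq_abs, abs_mul]
  calc |f (σ t ω)| * |ilhs U0 σ t j ω| ≤ |f (σ t ω)| * 1 := by
        apply mul_le_mul_of_nonneg_left _ (abs_nonneg _)
        rw [abs_le]; exact ⟨by linarith [hω.1], hω.2⟩
    _ = |f (σ t ω)| := mul_one _
    _ ≤ ∑ π : Equiv.Perm (Fin k), |f π| :=
        Finset.single_le_sum (f := fun π => |f π|) (fun i _ => abs_nonneg _)
          (Finset.mem_univ (σ t ω))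

end

section

variable {Ω : Type*} [MeasurableSpace Ω] {μ : Measure Ω} [IsProbabilityMeasure μ]
  {k : ℕ} {U0 : Fin k → Ω → ℝ} {σ : ℕ → Ω → Equiv.Perm (Fin k)}

lemma fact_ne_zero' (k : ℕ) : ((Nat.factorial k : ℝ)) ≠ 0 :=
  Nat.cast_ne_zero.2 (Nat.factorial_ne_zero k)

lemma integral_U0_fun (h : IsILHS μ U0 σ) (j : Fin k) (f : ℝ → ℝ) (hf : Measurable f) :
    ∫ ω, f (U0 j ω) ∂μ = ∫ x in Set.Ioo (0:ℝ) 1, f x := by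
  have := integral_map (μ := μ) (φ := U0 j) (h.1 j).aemeasurable
    (f := f) hf.aestronglyMeasurable
  rw [h.2.2.1 j] at this
  rw [← this]

lemma integral_ilhs (h : IsILHS μ U0 σ) : ∀ t j, ∫ ω, ilhs U0 σ t j ω ∂μ = 1/2 := by
  intro t
  induction t with
  | zero =>
    intro j
    have h1 : ∫ ω, ilhs U0 σ 0 j ω ∂μ = ∫ x in Set.Ioo (0:ℝ) 1, x :=
      integral_U0_fun h j (fun x => x) measurable_id
    rw [h1, ← integral_Ioc_eq_integral_Ioo, ← intervalIntegral.integral_of_le zero_le_one,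
      integral_id]
    norm_num
  | succ t ih =>
    intro j
    have hkpos : (0:ℝ) < k := by exact_mod_cast j.pos
    have hA : Integrable (fun a => (((σ t a) j : ℕ) : ℝ)) μ :=
      sigma_fn_int h t (fun π => ((π j : ℕ) : ℝ))
    have hstep : (∫ ω, ilhs U0 σ (t+1) j ω ∂μ)
        = (∫ a, ((((σ t a) j : ℕ) : ℝ) + ilhs U0 σ t j a) ∂μ) / k := by
      rw [← integral_div]
      rfl
    rw [hstep, integral_add hA (ilhs_int h t j), ih j,
      show (∫ a, (((σ t a) j : ℕ) : ℝ) ∂μ) = _ from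
        integral_perm_fun h t (fun π => ((π j : ℕ) : ℝ)),
      sum_perm_apply j, mul_div_cancel_left₀ _ (fact_ne_zero' k)]
    have hk0 : (k:ℝ) ≠ 0 := hkpos.ne'
    field_simp
    ring

/-- The key one-step expansion of the product moment. -/
lemma integral_mul_succ (h : IsILHS μ U0 σ) (t : ℕ) (i j : Fin k) :
    ∫ ω, ilhs U0 σ (t+1) i ω * ilhs U0 σ (t+1) j ω ∂μ
      = ((∑ π : Equiv.Perm (Fin k), ((π i : ℕ) : ℝ) * ((π j : ℕ) : ℝ)) / (Nat.factorial k)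
          + ((k:ℝ)-1)/2 * (1/2) + ((k:ℝ)-1)/2 * (1/2)
          + ∫ ω, ilhs U0 σ t i ω * ilhs U0 σ t j ω ∂μ) / ((k:ℝ)*(k:ℝ)) := by
  have hI1 : Integrable (fun a => (((σ t a) i : ℕ) : ℝ) * (((σ t a) j : ℕ) : ℝ)) μ :=
    sigma_fn_int h t (fun π => ((π i : ℕ) : ℝ) * ((π j : ℕ) : ℝ))
  have hI2 : Integrable (fun a => (((σ t a) i : ℕ) : ℝ) * ilhs U0 σ t j a) μ :=
    sigma_mul_ilhs_int h t (fun π => ((π i : ℕ) : ℝ)) j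
  have hI3 : Integrable (fun a => (((σ t a) j : ℕ) : ℝ) * ilhs U0 σ t i a) μ :=
    sigma_mul_ilhs_int h t (fun π => ((π j : ℕ) : ℝ)) i
  have hI4 : Integrable (fun a => ilhs U0 σ t i a * ilhs U0 σ t j a) μ :=
    ilhs_int_mul h t i j
  have hstep : (∫ ω, ilhs U0 σ (t+1) i ω * ilhs U0 σ (t+1) j ω ∂μ)
      = (∫ a, ((((σ t a) i : ℕ) : ℝ) * (((σ t a) j : ℕ) : ℝ)
          + (((σ t a) i : ℕ) : ℝ) * ilhs U0 σ t j a
          + (((σ t a) j : ℕ) : ℝ) * ilhs U0 σ t i a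
          + ilhs U0 σ t i a * ilhs U0 σ t j a) ∂μ) / ((k:ℝ)*(k:ℝ)) := by
    rw [← integral_div]
    apply integral_congr_ae
    filter_upwards with ω
    show ((((σ t ω) i : ℕ) : ℝ) + ilhs U0 σ t i ω) / k
        * (((((σ t ω) j : ℕ) : ℝ) + ilhs U0 σ t j ω) / k) = _
    ring
  have e1 : (∫ a, ((((σ t a) i : ℕ) : ℝ) * (((σ t a) j : ℕ) : ℝ)
          + (((σ t a) i : ℕ) : ℝ) * ilhs U0 σ t j a
          + (((σ t a) j : ℕ) : ℝ) * ilhs U0 σ t i a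
          + ilhs U0 σ t i a * ilhs U0 σ t j a) ∂μ)
      = (∫ a, ((((σ t a) i : ℕ) : ℝ) * (((σ t a) j : ℕ) : ℝ)
          + (((σ t a) i : ℕ) : ℝ) * ilhs U0 σ t j a
          + (((σ t a) j : ℕ) : ℝ) * ilhs U0 σ t i a) ∂μ)
        + ∫ a, ilhs U0 σ t i a * ilhs U0 σ t j a ∂μ :=
    integral_add ((hI1.add hI2).add hI3) hI4
  have e2 : (∫ a, ((((σ t a) i : ℕ) : ℝ) * (((σ t a) j : ℕ) : ℝ)
          + (((σ t a) i : ℕ) : ℝ) * ilhs U0 σ t j a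
          + (((σ t a) j : ℕ) : ℝ) * ilhs U0 σ t i a) ∂μ)
      = (∫ a, ((((σ t a) i : ℕ) : ℝ) * (((σ t a) j : ℕ) : ℝ)
          + (((σ t a) i : ℕ) : ℝ) * ilhs U0 σ t j a) ∂μ)
        + ∫ a, (((σ t a) j : ℕ) : ℝ) * ilhs U0 σ t i a ∂μ :=
    integral_add (hI1.add hI2) hI3
  have e3 : (∫ a, ((((σ t a) i : ℕ) : ℝ) * (((σ t a) j : ℕ) : ℝ)
          + (((σ t a) i : ℕ) : ℝ) * ilhs U0 σ t j a) ∂μ)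
      = (∫ a, (((σ t a) i : ℕ) : ℝ) * (((σ t a) j : ℕ) : ℝ) ∂μ)
        + ∫ a, (((σ t a) i : ℕ) : ℝ) * ilhs U0 σ t j a ∂μ :=
    integral_add hI1 hI2
  rw [hstep, e1, e2, e3]
  have hmeani : (∫ a, (((σ t a) i : ℕ) : ℝ) ∂μ) = ((k:ℝ)-1)/2 := by
    rw [show (∫ a, (((σ t a) i : ℕ) : ℝ) ∂μ) = _ from
      integral_perm_fun h t (fun π => ((π i : ℕ) : ℝ)),
      sum_perm_apply i, mul_div_cancel_left₀ _ (fact_ne_zero' k)]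
  have hmeanj : (∫ a, (((σ t a) j : ℕ) : ℝ) ∂μ) = ((k:ℝ)-1)/2 := by
    rw [show (∫ a, (((σ t a) j : ℕ) : ℝ) ∂μ) = _ from
      integral_perm_fun h t (fun π => ((π j : ℕ) : ℝ)),
      sum_perm_apply j, mul_div_cancel_left₀ _ (fact_ne_zero' k)]
  have h1 : (∫ a, (((σ t a) i : ℕ) : ℝ) * (((σ t a) j : ℕ) : ℝ) ∂μ)
      = (∑ π : Equiv.Perm (Fin k), ((π i : ℕ) : ℝ) * ((π j : ℕ) : ℝ)) / (Nat.factorial k) :=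
    integral_perm_fun h t (fun π => ((π i : ℕ) : ℝ) * ((π j : ℕ) : ℝ))
  have h2 : (∫ a, (((σ t a) i : ℕ) : ℝ) * ilhs U0 σ t j a ∂μ)
      = (∫ a, (((σ t a) i : ℕ) : ℝ) ∂μ) * ∫ a, ilhs U0 σ t j a ∂μ := by
    have hInd := (indep_sigma_ilhs h t i j).comp
      (measurable_from_top (f := fun π : Equiv.Perm (Fin k) => ((π i : ℕ) : ℝ)))
      measurable_snd
    exact hInd.integral_mul_eq_mul_integral
      (sigma_fn_int h t (fun π => ((π i : ℕ) : ℝ))).aestronglyMeasurable (ilhs_int h t j).aestronglyMeasurable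
  have h3 : (∫ a, (((σ t a) j : ℕ) : ℝ) * ilhs U0 σ t i a ∂μ)
      = (∫ a, (((σ t a) j : ℕ) : ℝ) ∂μ) * ∫ a, ilhs U0 σ t i a ∂μ := by
    have hInd := (indep_sigma_ilhs h t i j).comp
      (measurable_from_top (f := fun π : Equiv.Perm (Fin k) => ((π j : ℕ) : ℝ)))
      measurable_fst
    exact hInd.integral_mul_eq_mul_integral
      (sigma_fn_int h t (fun π => ((π j : ℕ) : ℝ))).aestronglyMeasurable (ilhs_int h t i).aestronglyMeasurable
  rw [h1, h2, h3, hmeani, hmeanj, integral_ilhs h t i, integral_ilhs h t j]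

end

section

variable {Ω : Type*} [MeasurableSpace Ω] {μ : Measure Ω} [IsProbabilityMeasure μ]
  {k : ℕ} {U0 : Fin k → Ω → ℝ} {σ : ℕ → Ω → Equiv.Perm (Fin k)}

lemma integral_ilhs_sq (h : IsILHS μ U0 σ) (hk2 : 2 ≤ k) :
    ∀ t j, ∫ ω, ilhs U0 σ t j ω * ilhs U0 σ t j ω ∂μ = 1/3 := by
  have hk0 : (k:ℝ) ≠ 0 := by positivity
  intro t
  induction t with
  | zero =>
    intro j
    have h1 : ∫ ω, ilhs U0 σ 0 j ω * ilhs U0 σ 0 j ω ∂μ = ∫ x in Set.Ioo (0:ℝ) 1, x * x :=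
      integral_U0_fun h j (fun x => x * x) (measurable_id.mul measurable_id)
    have h2 : ∀ x : ℝ, x * x = x ^ 2 := fun x => (sq x).symm
    rw [h1]
    simp only [h2]
    rw [← integral_Ioc_eq_integral_Ioo, ← intervalIntegral.integral_of_le zero_le_one,
      integral_pow]
    norm_num
  | succ t ih =>
    intro j
    rw [integral_mul_succ h t j j, ih j]
    have hsum : ∑ π : Equiv.Perm (Fin k), ((π j : ℕ) : ℝ) * ((π j : ℕ) : ℝ)
        = (Nat.factorial k) * (((k:ℝ) - 1) * (2*(k:ℝ) - 1) / 6) := by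
      rw [← sum_perm_apply_sq j]
      exact Finset.sum_congr rfl fun π _ => (sq ((π j : ℕ) : ℝ)).symm
    rw [hsum, mul_div_cancel_left₀ _ (fact_ne_zero' k)]
    field_simp
    ring

lemma integral_ilhs_cross (h : IsILHS μ U0 σ) (hk2 : 2 ≤ k) :
    ∀ t, ∀ i j : Fin k, i ≠ j →
      ∫ ω, ilhs U0 σ t i ω * ilhs U0 σ t j ω ∂μ
        = 1/4 - (1 - ((k:ℝ) ^ (2 * t))⁻¹) / (12 * ((k:ℝ) - 1)) := by
  have hk0 : (k:ℝ) ≠ 0 := by positivity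
  have hkR : (2:ℝ) ≤ (k:ℝ) := by exact_mod_cast hk2
  have hk1 : (k:ℝ) - 1 ≠ 0 := by linarith
  intro t
  induction t with
  | zero =>
    intro i j hij
    have hIndep : IndepFun (U0 i) (U0 j) μ := by
      have := (h.2.2.2.2).indepFun
        (show (Sum.inl i : Fin k ⊕ ℕ) ≠ Sum.inl j by simp [hij])
      exact this
    have := hIndep.integral_mul_eq_mul_integral (ilhs_int h 0 i).aestronglyMeasurable (ilhs_int h 0 j).aestronglyMeasurable
    have e1 : integral μ (U0 i) = 1/2 := integral_ilhs h 0 i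
    have e2 : integral μ (U0 j) = 1/2 := integral_ilhs h 0 j
    rw [show (∫ ω, ilhs U0 σ 0 i ω * ilhs U0 σ 0 j ω ∂μ) = _ from this, e1, e2]
    norm_num
  | succ t ih =>
    intro i j hij
    rw [integral_mul_succ h t i j, ih i j hij, sum_perm_apply_mul hk2 hij,
      mul_div_cancel_left₀ _ (fact_ne_zero' k)]
    have hpow : (k:ℝ) ^ (2 * (t+1)) = (k:ℝ) ^ (2 * t) * ((k:ℝ) * (k:ℝ)) := by
      rw [show 2 * (t+1) = 2 * t + 2 by ring, pow_add]
      ring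
    have hpowne : ((k:ℝ) ^ (2 * t)) ≠ 0 := pow_ne_zero _ hk0
    rw [hpow]
    field_simp
    ring

end


/-- Pairwise correlations of the ILHS sequence:
`Corr(U_t⁽ⁱ⁾, U_t⁽ʲ⁾) = −(1/(k−1)) (1 − k^{−2t})`. -/
theorem ilhs_corr {Ω : Type*} [MeasurableSpace Ω] (μ : Measure Ω)
    [IsProbabilityMeasure μ] {k : ℕ} (hk : 2 ≤ k)
    (U0 : Fin k → Ω → ℝ) (σ : ℕ → Ω → Equiv.Perm (Fin k)) (h : IsILHS μ U0 σ) :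
    ∀ (t : ℕ) (i j : Fin k), i ≠ j →
      corr μ (ilhs U0 σ t i) (ilhs U0 σ t j) =
        -(1 / ((k : ℝ) - 1)) * (1 - ((k : ℝ) ^ (2 * t))⁻¹) := by
  intro t i j hij
  have hk0 : (k:ℝ) ≠ 0 := by positivity
  have hkR : (2:ℝ) ≤ (k:ℝ) := by exact_mod_cast hk
  have hk1 : (k:ℝ) - 1 ≠ 0 := by linarith
  have hvar : ∀ m : Fin k, covar μ (ilhs U0 σ t m) (ilhs U0 σ t m) = 1/12 := by
    intro m
    unfold covar
    rw [integral_ilhs_sq h hk t m, integral_ilhs h t m]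
    norm_num
  have hcov : covar μ (ilhs U0 σ t i) (ilhs U0 σ t j)
      = -(1 - ((k:ℝ) ^ (2 * t))⁻¹) / (12 * ((k:ℝ) - 1)) := by
    unfold covar
    rw [integral_ilhs_cross h hk t i j hij, integral_ilhs h t i, integral_ilhs h t j]
    ring
  unfold corr
  rw [hvar i, hvar j, hcov, Real.mul_self_sqrt (by norm_num : (0:ℝ) ≤ 1/12)]
  have hpowne : ((k:ℝ) ^ (2 * t)) ≠ 0 := pow_ne_zero _ hk0
  field_simp
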